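/- Pareto frontier sufficiency: at each node, keeping only the Pareto-optimal labels under the partial order (cost, resource vector, visited set) — componentwise ≤ and ⊆ — suffices: for every feasible elementary s-d path there is a feasible elementary s-d path of no greater cost all of whose prefixes correspond to Pareto-optimal labels. -/

import Mathlib

/-- Cost of a walk. -/
def walkCost {V : Type} (c : V → V → ℝ) (p : List V) : ℝ :=
  ((p.zip p.tail).map fun q => c q.1 q.2).sum

/-- Consumption of resource `t` along a walk. -/
def walkRes {V : Type} {k : ℕ} (r : V → V → Fin k → ℝ) (p : List V) (t : Fin k) : ℝ :=
  ((p.zip p.tail).map fun q => r q.1 q.2 t).sum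

/-- A label: a feasible elementary partial path from `s` (nonempty walk
starting at `s`, no repeated nodes, resource-feasible). -/
def IsLabel {V : Type} [DecidableEq V] {k : ℕ} (A : V → V → Prop) (s : V)
    (r : V → V → Fin k → ℝ) (U : Fin k → ℝ) (q : List V) : Prop :=
  q ≠ [] ∧ q.Chain' A ∧ q.head? = some s ∧ q.Nodup ∧ ∀ t, walkRes r q t ≤ U t

/-- The partial order `⪯` on labels at the same node: componentwise comparison
of (cost, visited set, resource vector). -/
def LabelLE {V : Type} [DecidableEq V] {k : ℕ} (c : V → V → ℝ)
    (r : V → V → Fin k → ℝ) (q₁ q₂ : List V) : Prop :=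
  q₁.getLast? = q₂.getLast? ∧ walkCost c q₁ ≤ walkCost c q₂ ∧
    q₁.toFinset ⊆ q₂.toFinset ∧ ∀ t, walkRes r q₁ t ≤ walkRes r q₂ t

/-- A label is Pareto-optimal if no label at the same node strictly dominates
it (i.e. `⪯`-below it but not equal in the order-relevant components). -/
def ParetoOptimal {V : Type} [DecidableEq V] {k : ℕ} (A : V → V → Prop) (s : V)
    (c : V → V → ℝ) (r : V → V → Fin k → ℝ) (U : Fin k → ℝ) (q : List V) : Prop :=
  ¬ ∃ q', IsLabel A s r U q' ∧ LabelLE c r q' q ∧ ¬ LabelLE c r q q'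

lemma zip_tail_append_aux {V : Type} : ∀ (l₁ l₂ : List V) (a : V), l₁.getLast? = some a →
    (l₁ ++ l₂).zip (l₁ ++ l₂).tail = l₁.zip l₁.tail ++ (a :: l₂).zip l₂
  | [], _, _, h => by simp at h
  | [x], l₂, a, h => by simp_all
  | x :: y :: l, l₂, a, h => by
      have ih := zip_tail_append_aux (y :: l) l₂ a (by simpa using h)
      simpa using ih

lemma walkCost_append_aux {V : Type} (c : V → V → ℝ) (l₁ l₂ : List V) (a : V)
    (h : l₁.getLast? = some a) :
    walkCost c (l₁ ++ l₂) = walkCost c l₁ + walkCost c (a :: l₂) := by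
  unfold walkCost
  rw [zip_tail_append_aux l₁ l₂ a h, List.map_append, List.sum_append]
  rfl

lemma walkRes_append_aux {V : Type} {k : ℕ} (r : V → V → Fin k → ℝ) (l₁ l₂ : List V) (a : V)
    (h : l₁.getLast? = some a) (t : Fin k) :
    walkRes r (l₁ ++ l₂) t = walkRes r l₁ t + walkRes r (a :: l₂) t :=
  walkCost_append_aux (fun u v => r u v t) l₁ l₂ a h

/-- Pareto frontier sufficiency: for every feasible elementary `s`-`d` path
there is a feasible elementary `s`-`d` path of no greater cost all of whose
(nonempty) prefixes are Pareto-optimal labels. -/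
theorem stmt18 {V : Type} [Fintype V] [DecidableEq V] {k : ℕ}
    (A : V → V → Prop) (c : V → V → ℝ) (r : V → V → Fin k → ℝ) (U : Fin k → ℝ)
    (hr : ∀ u v t, 0 ≤ r u v t) (s d : V) :
    ∀ p, IsLabel A s r U p → p.getLast? = some d →
      ∃ p', IsLabel A s r U p' ∧ p'.getLast? = some d ∧
        walkCost c p' ≤ walkCost c p ∧
        ∀ q, q ≠ [] → q <+: p' → ParetoOptimal A s c r U q := by
  classical
  intro p hp hpd
  set S : Set (List V) :=
    {x | IsLabel A s r U x ∧ x.getLast? = some d ∧ walkCost c x ≤ walkCost c p} with hSdef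
  have hSfin : S.Finite := by
    apply (List.finite_length_le V (Fintype.card V)).subset
    intro x hx
    exact hx.1.2.2.2.1.length_le_card
  have hpS : p ∈ S := ⟨hp, hpd, le_refl _⟩
  obtain ⟨p', hp'S, hmin⟩ := Set.exists_min_image S
    (fun x => walkCost c x + (∑ t, walkRes r x t) + x.length) hSfin ⟨p, hpS⟩
  obtain ⟨hp'lab, hp'd, hp'cost⟩ := hp'S
  refine ⟨p', hp'lab, hp'd, hp'cost, ?_⟩
  intro q hq hqp hcontra
  obtain ⟨q', hq'lab, hle, hnot⟩ := hcontra
  obtain ⟨rest, hrest⟩ := hqp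
  obtain ⟨a, ha⟩ : ∃ a, q.getLast? = some a := by
    cases hqa : q.getLast? with
    | none => exact absurd (List.getLast?_eq_none_iff.mp hqa) hq
    | some a => exact ⟨a, rfl⟩
  obtain ⟨hlast, hcost, hsub, hres⟩ := hle
  have hq'ne : q' ≠ [] := hq'lab.1
  have hq'a : q'.getLast? = some a := hlast.trans ha
  -- decompose p'
  have hpn : (q ++ rest).Nodup := by rw [hrest]; exact hp'lab.2.2.2.1
  obtain ⟨hqn, hrn, hdisj⟩ := List.nodup_append.mp hpn
  have hch : (q ++ rest).Chain' A := by rw [hrest]; exact hp'lab.2.1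
  obtain ⟨hchq, hchr, hconn⟩ := List.isChain_append.mp hch
  -- the replacement path
  set p'' : List V := q' ++ rest with hp''def
  have hq'n : q'.Nodup := hq'lab.2.2.2.1
  have hq'sub : ∀ x, x ∈ q' → x ∈ q := by
    intro x hx
    have := hsub (List.mem_toFinset.mpr hx)
    exact List.mem_toFinset.mp this
  have hp''lab : IsLabel A s r U p'' := by
    refine ⟨by simp [hp''def, hq'ne], ?_, ?_, ?_, ?_⟩
    · refine List.isChain_append.mpr ⟨hq'lab.2.1, hchr, ?_⟩
      intro x hx y hy
      rw [hlast] at hx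
      exact hconn x hx y hy
    · obtain ⟨x, xs, hxx⟩ := List.exists_cons_of_ne_nil hq'ne
      have := hq'lab.2.2.1
      rw [hxx] at this
      simp only [hp''def, hxx, List.cons_append]
      simpa using this
    · refine List.nodup_append.mpr ⟨hq'n, hrn, ?_⟩
      intro x hx y hy
      exact hdisj x (hq'sub x hx) y hy
    · intro t
      rw [hp''def, walkRes_append_aux r q' rest a hq'a t]
      have h1 := hres t
      have h2 : walkRes r (q ++ rest) t ≤ U t := by
        rw [hrest]; exact hp'lab.2.2.2.2 t
      rw [walkRes_append_aux r q rest a ha t] at h2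
      linarith
  have hp''last : p''.getLast? = some d := by
    cases rest with
    | nil =>
      have hq_eq : q = p' := by simpa using hrest
      rw [hp''def, List.append_nil, hq'a, ← ha, hq_eq, hp'd]
    | cons y ys =>
      rw [hp''def, List.getLast?_append_cons]
      rw [← hrest, List.getLast?_append_cons] at hp'd
      exact hp'd
  -- cost decomposition
  have hcost'' : walkCost c p'' = walkCost c q' + walkCost c (a :: rest) :=
    walkCost_append_aux c q' rest a hq'a
  have hcostp' : walkCost c p' = walkCost c q + walkCost c (a :: rest) := by
    rw [← hrest]; exact walkCost_append_aux c q rest a ha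
  have hp''cost : walkCost c p'' ≤ walkCost c p' := by
    rw [hcost'', hcostp']; linarith
  have hp''S : p'' ∈ S := ⟨hp''lab, hp''last, le_trans hp''cost hp'cost⟩
  -- resource sums decomposition
  have hsum'' : ∑ t, walkRes r p'' t
      = (∑ t, walkRes r q' t) + ∑ t, walkRes r (a :: rest) t := by
    rw [← Finset.sum_add_distrib]
    exact Finset.sum_congr rfl fun t _ => walkRes_append_aux r q' rest a hq'a t
  have hsump' : ∑ t, walkRes r p' t
      = (∑ t, walkRes r q t) + ∑ t, walkRes r (a :: rest) t := by
    rw [← Finset.sum_add_distrib, ← hrest]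
    exact Finset.sum_congr rfl fun t _ => walkRes_append_aux r q rest a ha t
  -- lengths
  have hlen'' : (p''.length : ℝ) = q'.length + rest.length := by
    rw [hp''def]; push_cast [List.length_append]; ring
  have hlenp' : (p'.length : ℝ) = q.length + rest.length := by
    rw [← hrest]; push_cast [List.length_append]; ring
  have hlenle : q'.length ≤ q.length := by
    have hcard := Finset.card_le_card hsub
    rwa [List.toFinset_card_of_nodup hq'n, List.toFinset_card_of_nodup hqn] at hcard
  have hressum : ∑ t, walkRes r q' t ≤ ∑ t, walkRes r q t :=
    Finset.sum_le_sum fun t _ => hres t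
  -- strictness from non-domination in the reverse direction
  have hkey : walkCost c q' + (∑ t, walkRes r q' t) + (q'.length : ℝ)
      < walkCost c q + (∑ t, walkRes r q t) + (q.length : ℝ) := by
    have hnot' : ¬ (walkCost c q ≤ walkCost c q' ∧ q.toFinset ⊆ q'.toFinset ∧
        ∀ t, walkRes r q t ≤ walkRes r q' t) := fun h =>
      hnot ⟨hlast.symm, h.1, h.2.1, h.2.2⟩
    rcases not_and_or.mp hnot' with h1 | h23
    · have : walkCost c q' < walkCost c q := not_le.mp h1
      have : (q'.length : ℝ) ≤ q.length := Nat.cast_le.mpr hlenle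
      linarith [not_le.mp h1]
    · rcases not_and_or.mp h23 with h2 | h3
      · have hss : q'.toFinset ⊂ q.toFinset := ⟨hsub, h2⟩
        have hcard := Finset.card_lt_card hss
        rw [List.toFinset_card_of_nodup hq'n, List.toFinset_card_of_nodup hqn] at hcard
        have : (q'.length : ℝ) < q.length := Nat.cast_lt.mpr hcard
        linarith
      · push_neg at h3
        obtain ⟨t, ht⟩ := h3
        have hsumlt : ∑ t, walkRes r q' t < ∑ t, walkRes r q t :=
          Finset.sum_lt_sum (fun i _ => hres i) ⟨t, Finset.mem_univ t, ht⟩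
        have : (q'.length : ℝ) ≤ q.length := Nat.cast_le.mpr hlenle
        linarith
  have hlt : walkCost c p'' + (∑ t, walkRes r p'' t) + (p''.length : ℝ)
      < walkCost c p' + (∑ t, walkRes r p' t) + (p'.length : ℝ) := by
    rw [hcost'', hcostp', hsum'', hsump', hlen'', hlenp']
    linarith
  exact absurd (hmin p'' hp''S) (not_le.mpr hlt)
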